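/- For any finite set K of Σ-models, the class of models satisfying GCI(K) equals the class of models satisfying GCI({Σ_{I ∈ K} I}), i.e. a GCI holds in every model of K if and only if it holds in the coproduct of the models in K. -/

import Mathlib

/-- ALC concept descriptions over concept names `NC` and role names `NR`. -/
inductive ALCConcept (NC NR : Type) : Type
  | bot : ALCConcept NC NR
  | top : ALCConcept NC NR
  | atom : NC → ALCConcept NC NR
  | inf : ALCConcept NC NR → ALCConcept NC NR → ALCConcept NC NR
  | sup : ALCConcept NC NR → ALCConcept NC NR → ALCConcept NC NR
  | compl : ALCConcept NC NR → ALCConcept NC NR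
  | all : NR → ALCConcept NC NR → ALCConcept NC NR
  | ex : NR → ALCConcept NC NR → ALCConcept NC NR

/-- A Σ-model: nonempty carrier, interpretation of concept and role names. -/
structure ALCModel (NC NR : Type) : Type 1 where
  Δ : Type
  nonempty : Nonempty Δ
  ic : NC → Set Δ
  ir : NR → Set (Δ × Δ)

/-- Standard ALC evaluation of a concept in a model. -/
def ALCModel.eval {NC NR : Type} (I : ALCModel NC NR) : ALCConcept NC NR → Set I.Δ
  | .bot => ∅
  | .top => Set.univ
  | .atom c => I.ic c
  | .inf C D => I.eval C ∩ I.eval D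
  | .sup C D => I.eval C ∪ I.eval D
  | .compl C => (I.eval C)ᶜ
  | .all r C => {x | ∀ y, (x, y) ∈ I.ir r → y ∈ I.eval C}
  | .ex r C => {x | ∃ y, (x, y) ∈ I.ir r ∧ y ∈ I.eval C}

/-- Satisfaction of a GCI `C ⊑ D`. -/
def ALCModel.Sat {NC NR : Type} (I : ALCModel NC NR) (C D : ALCConcept NC NR) : Prop :=
  I.eval C ⊆ I.eval D

/-- ALC morphism (functional bisimulation) between models. -/
def IsMorphism {NC NR : Type} (I I' : ALCModel NC NR) (μ : I.Δ → I'.Δ) : Prop :=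
  (∀ c a, a ∈ I.ic c ↔ μ a ∈ I'.ic c) ∧
  (∀ r a b, (a, b) ∈ I.ir r → (μ a, μ b) ∈ I'.ir r) ∧
  (∀ r a a', (μ a, a') ∈ I'.ir r → ∃ b, (a, b) ∈ I.ir r ∧ μ b = a')

/-- Coproduct (disjoint union) of a family of models. -/
def Coproduct {NC NR Λ : Type} [Nonempty Λ] (F : Λ → ALCModel NC NR) : ALCModel NC NR where
  Δ := Σ i, (F i).Δ
  nonempty := ⟨⟨Classical.arbitrary Λ, (F _).nonempty.some⟩⟩
  ic c := {p | p.2 ∈ (F p.1).ic c}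
  ir r := {p | ∃ (i : Λ) (a b : (F i).Δ), (a, b) ∈ (F i).ir r ∧ p.1 = ⟨i, a⟩ ∧ p.2 = ⟨i, b⟩}


lemma eval_coprod {NC NR Λ : Type} [Nonempty Λ] (F : Λ → ALCModel NC NR) :
    ∀ (C : ALCConcept NC NR) (i : Λ) (a : (F i).Δ),
      (⟨i, a⟩ : (Coproduct F).Δ) ∈ (Coproduct F).eval C ↔ a ∈ (F i).eval C := by
  intro C
  induction C with
  | bot => intro i a; simp [ALCModel.eval]; exact fun h => h
  | top => intro i a; simp [ALCModel.eval]; trivial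
  | atom c => intro i a; simp [ALCModel.eval, Coproduct]; exact Iff.rfl
  | inf C D ihC ihD => intro i a; simp [ALCModel.eval, ihC, ihD]; exact and_congr (ihC i a) (ihD i a)
  | sup C D ihC ihD => intro i a; simp [ALCModel.eval, ihC, ihD]; exact or_congr (ihC i a) (ihD i a)
  | compl C ihC => intro i a; simp [ALCModel.eval, ihC]; exact not_congr (ihC i a)
  | all r C ihC =>
    intro i a
    constructor
    · intro h b hb
      have := h ⟨i, b⟩ ⟨i, a, b, hb, rfl, rfl⟩
      exact (ihC i b).mp this
    · intro h y hy
      obtain ⟨j, x, z, hxz, h1, h2⟩ := hy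
      obtain ⟨rfl, hax⟩ := Sigma.mk.inj_iff.mp h1
      cases eq_of_heq hax
      subst h2
      exact (ihC i z).mpr (h z hxz)
  | ex r C ihC =>
    intro i a
    constructor
    · intro h
      obtain ⟨y, hy, hyC⟩ := h
      obtain ⟨j, x, z, hxz, h1, h2⟩ := hy
      obtain ⟨rfl, hax⟩ := Sigma.mk.inj_iff.mp h1
      cases eq_of_heq hax
      subst h2
      exact ⟨z, hxz, (ihC i z).mp hyC⟩
    · intro ⟨b, hb, hbC⟩
      exact ⟨⟨i, b⟩, ⟨i, a, b, hb, rfl, rfl⟩, (ihC i b).mpr hbC⟩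

lemma sat_coprod {NC NR Λ : Type} [Nonempty Λ] (F : Λ → ALCModel NC NR)
    (C D : ALCConcept NC NR) :
    (Coproduct F).Sat C D ↔ ∀ i, (F i).Sat C D := by
  constructor
  · intro h i a ha
    exact (eval_coprod F D i a).mp (h ((eval_coprod F C i a).mpr ha))
  · intro h p hp
    obtain ⟨i, a⟩ := p
    exact (eval_coprod F D i a).mpr (h i ((eval_coprod F C i a).mp hp))

theorem gci_of_family_eq_gci_of_coproduct {NC NR Λ : Type} [Finite Λ] [Nonempty Λ]
    (F : Λ → ALCModel NC NR) :
    {J : ALCModel NC NR | ∀ C D : ALCConcept NC NR, (∀ i : Λ, (F i).Sat C D) → J.Sat C D} =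
    {J : ALCModel NC NR | ∀ C D : ALCConcept NC NR, (Coproduct F).Sat C D → J.Sat C D} := by
  ext J
  simp only [Set.mem_setOf_eq, sat_coprod]
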